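/- Let $u$ and $v$ be partial isometries in a C*-algebra. The product $uv$ is a partial isometry if and only if the source projection $u^*u$ of $u$ commutes with the range projection $vv^*$ of $v$. -/
import Mathlib


/-- Let `u` and `v` be partial isometries in a C*-algebra.
The product `u * v` is a partial isometry if and only if the source projection
`u* u` of `u` commutes with the range projection `v v*` of `v`. -/
theorem product_partial_isometry_iff {A : Type*} [NormedRing A] [StarRing A]
    [CStarRing A] [CompleteSpace A] [NormedAlgebra ℂ A] [StarModule ℂ A]
    (u v : A) (hu : u * star u * u = u) (hv : v * star v * v = v) :
    (u * v) * star (u * v) * (u * v) = u * v ↔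
      (star u * u) * (v * star v) = (v * star v) * (star u * u) := by
  set p := star u * u with hpdef
  set q := v * star v with hqdef
  have hps : star p = p := by simp [hpdef, star_mul, mul_assoc]
  have hqs : star q = q := by simp [hqdef, star_mul, mul_assoc]
  have hp : p * p = p := by
    calc p * p = star u * (u * star u * u) := by rw [hpdef]; noncomm_ring
    _ = p := by rw [hu, hpdef]
  have hq : q * q = q := by
    calc q * q = (v * star v * v) * star v := by rw [hqdef]; noncomm_ring
    _ = q := by rw [hv, hqdef]
  have hup : u * p = u := by rw [hpdef, ← mul_assoc, hu]
  have hqv : q * v = v := by rw [hqdef, hv]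
  constructor
  · intro h
    -- idempotency of p * q
    have hpq : p * q * (p * q) = p * q := by
      have h2 := congrArg (fun x => star u * (x * star v)) h
      simp only [star_mul, mul_assoc] at h2
      simp only [hpdef, hqdef, mul_assoc]
      exact h2
    have t1 : q * p * (p * q) = q * (p * q) := by
      calc q * p * (p * q) = q * (p * p * q) := by noncomm_ring
      _ = q * (p * q) := by rw [hp]
    have t2 : q * p * (q * (p * q)) = q * (p * q) := by
      calc q * p * (q * (p * q)) = q * (p * q * (p * q)) := by noncomm_ring
      _ = q * (p * q) := by rw [hpq]
    have t3 : q * (p * q) * (p * q) = q * (p * q) := by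
      calc q * (p * q) * (p * q) = q * (p * q * (p * q)) := by noncomm_ring
      _ = q * (p * q) := by rw [hpq]
    have t4 : q * (p * q) * (q * (p * q)) = q * (p * q) := by
      calc q * (p * q) * (q * (p * q)) = q * p * (q * q * (p * q)) := by noncomm_ring
      _ = q * p * (q * (p * q)) := by rw [hq]
      _ = q * (p * q) := t2
    have hz : star (p * q - q * (p * q)) * (p * q - q * (p * q)) = 0 := by
      have hstar : star (p * q - q * (p * q)) = q * p - q * p * q := by
        simp [star_sub, star_mul, hps, hqs, mul_assoc]
      rw [hstar]
      have : (q * p - q * p * q) * (p * q - q * (p * q)) =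
          q * p * (p * q) - q * p * (q * (p * q)) -
            (q * (p * q) * (p * q) - q * (p * q) * (q * (p * q))) := by
        simp only [sub_mul, mul_sub, mul_assoc]
      rw [this, t1, t2, t3, t4]
      abel
    have hx : p * q - q * (p * q) = 0 := by
      rwa [CStarRing.star_mul_self_eq_zero_iff] at hz
    have hsym : p * q = q * (p * q) := sub_eq_zero.mp hx
    have h5 : q * p = q * (p * q) := by
      simpa [star_mul, hps, hqs, mul_assoc] using congrArg star hsym
    exact hsym.trans h5.symm
  · intro hcomm
    calc (u * v) * star (u * v) * (u * v)
        = u * (q * p) * v := by simp only [star_mul, hpdef, hqdef, mul_assoc]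
      _ = u * (p * q) * v := by rw [hcomm]
      _ = (u * p) * (q * v) := by noncomm_ring
      _ = u * v := by rw [hup, hqv]
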